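/- The total social cost under merit-order dispatch can be non-convex: let two generators have capacities ḡ₁ > 0 and ḡ₂ > 0, marginal fuel costs MF₁ < MF₂ (so the merit order is (1,2)), and marginal carbon costs MC₁, MC₂ ≥ 0 with MF₁ + MC₁ > MF₂ + MC₂. Define the total social cost C(x) = (MF₁ + MC₁) · min(x, ḡ₁) + (MF₂ + MC₂) · max(0, min(x − ḡ₁, ḡ₂)) for x ∈ [0, ḡ₁ + ḡ₂]. Then C is not convex on [0, ḡ₁ + ḡ₂]. -/

import Mathlib

/-- the merit-order total social cost can be non-convex.
Two generators with capacities `g1, g2 > 0`, fuel costs `MF1 < MF2` (so the merit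
order is (1,2)), and carbon costs `MC1, MC2 ≥ 0` with `MF1 + MC1 > MF2 + MC2`.
The total social cost
`C x = (MF1 + MC1)·min x g1 + (MF2 + MC2)·max 0 (min (x − g1) g2)`
is not convex on `[0, g1 + g2]`. -/
theorem social_cost_not_convex
    (g1 g2 MF1 MF2 MC1 MC2 : ℝ)
    (hg1 : 0 < g1) (hg2 : 0 < g2)
    (hMF : MF1 < MF2) (hMC1 : 0 ≤ MC1) (hMC2 : 0 ≤ MC2)
    (hflip : MF2 + MC2 < MF1 + MC1)
    (C : ℝ → ℝ)
    (hC : ∀ x ∈ Set.Icc (0 : ℝ) (g1 + g2),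
      C x = (MF1 + MC1) * min x g1 + (MF2 + MC2) * max 0 (min (x - g1) g2)) :
    ¬ ConvexOn ℝ (Set.Icc (0 : ℝ) (g1 + g2)) C := by
  intro h
  have hs : 0 < g1 + g2 := by linarith
  have h0 : (0:ℝ) ∈ Set.Icc (0:ℝ) (g1 + g2) := by constructor <;> linarith
  have hT : (g1 + g2) ∈ Set.Icc (0:ℝ) (g1 + g2) := by constructor <;> linarith
  have hM : g1 ∈ Set.Icc (0:ℝ) (g1 + g2) := by constructor <;> linarith
  have hla : (0:ℝ) ≤ g2 / (g1 + g2) := by positivity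
  have hlb : (0:ℝ) ≤ g1 / (g1 + g2) := by positivity
  have hlab : g2 / (g1 + g2) + g1 / (g1 + g2) = 1 := by field_simp; ring
  have key := h.2 h0 hT hla hlb hlab
  simp only [smul_eq_mul] at key
  have e1 : g2 / (g1 + g2) * (0:ℝ) + g1 / (g1 + g2) * (g1 + g2) = g1 := by
    field_simp
    ring
  rw [e1] at key
  have c0 : C 0 = 0 := by
    rw [hC 0 h0]
    rw [min_eq_left hg1.le]
    have : min (0 - g1) g2 = 0 - g1 := min_eq_left (by linarith)
    rw [this, max_eq_left (by linarith)]
    ring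
  have cM : C g1 = (MF1 + MC1) * g1 := by
    rw [hC g1 hM]
    rw [min_eq_right le_rfl]
    have : min (g1 - g1) g2 = g1 - g1 := min_eq_left (by linarith)
    rw [this, max_eq_left (by linarith)]
    ring
  have cT : C (g1 + g2) = (MF1 + MC1) * g1 + (MF2 + MC2) * g2 := by
    rw [hC _ hT]
    rw [min_eq_right (by linarith)]
    have : min (g1 + g2 - g1) g2 = g2 := by rw [min_eq_right (by linarith)]; 
    rw [this, max_eq_right hg2.le]
  rw [c0, cM, cT] at key
  have : g1 * ((MF1 + MC1) * g1 + (MF2 + MC2) * g2) < (MF1 + MC1) * g1 * (g1 + g2) := by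
    nlinarith [mul_pos hg1 hg2]
  rw [mul_zero, zero_add, div_mul_eq_mul_div] at key
  have := (le_div_iff₀ hs).mp key
  nlinarith
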